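/- Let q ∈ [1,∞) and let E be a separable reflexive Banach space. Let (ũ_m)_{m∈ℕ} be random variables on a probability space (Ω,𝔉,ℙ) with values in L^q_loc([0,∞); E) (i.e., measurable into L^q([0,T]; E) for every T > 0), and suppose each ũ_m is weakly stationary, i.e., for every τ ≥ 0 the law of the shifted trajectory S_τũ_m, where (S_τũ_m)(t) = ũ_m(t+τ), coincides with the law of ũ_m on L^q_loc([0,∞); E). If ũ is a random variable with values in L^q_loc([0,∞); E) such that ℙ-almost surely ũ_m ⇀ ũ weakly in L^q([0,T]; E) for every T > 0 (i.e., ∫_0^T ⟨φ(t), ũ_m(t)⟩ dt → ∫_0^T ⟨φ(t), ũ(t)⟩ dt for every φ ∈ L^{q'}([0,T]; E*)), then ũ is weakly stationary: for every τ ≥ 0 the laws of S_τũ and ũ on L^q_loc([0,∞); E) coincide. -/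

import Mathlib

open MeasureTheory Filter ENNReal
open scoped NNReal


/-- A countable family of norm-one functionals separating points of a separable normed space. -/
lemma aux_sep_family (E : Type*) [NormedAddCommGroup E] [NormedSpace ℝ E]
    [SecondCountableTopology E] :
    ∃ e : ℕ → StrongDual ℝ E, (∀ n, ‖e n‖ ≤ 1) ∧ ∀ x : E, (∀ n, e n x = 0) → x = 0 := by
  have : Nonempty E := ⟨0⟩
  have hd : DenseRange (TopologicalSpace.denseSeq E) := TopologicalSpace.denseRange_denseSeq E
  choose e he1 he2 using fun n => exists_dual_vector'' ℝ (TopologicalSpace.denseSeq E n)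
  refine ⟨e, he1, fun x hx => ?_⟩
  by_contra hx0
  have hxn : (0:ℝ) < ‖x‖ := norm_pos_iff.mpr hx0
  obtain ⟨n, hn⟩ := Metric.denseRange_iff.mp hd x (‖x‖ / 3) (by linarith)
  set s := TopologicalSpace.denseSeq E n with hs
  have h1 : ‖s‖ ≤ dist x s := by
    calc ‖s‖ = e n s - e n x := by rw [hx n, sub_zero]; exact (he2 n).symm
    _ = e n (s - x) := by rw [map_sub]
    _ ≤ |e n (s - x)| := le_abs_self _
    _ = ‖e n (s - x)‖ := (Real.norm_eq_abs _).symm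
    _ ≤ ‖e n‖ * ‖s - x‖ := (e n).le_opNorm _
    _ ≤ 1 * ‖s - x‖ := mul_le_mul_of_nonneg_right (he1 n) (norm_nonneg _)
    _ = dist x s := by rw [one_mul, norm_sub_rev, ← dist_eq_norm]
  have h2 : ‖x‖ ≤ ‖s‖ + dist x s := by
    have h3 : ‖x‖ ≤ ‖s‖ + ‖x - s‖ := by
      have := norm_add_le s (x - s); simpa using this
    simpa [dist_eq_norm] using h3
  linarith

/-- Change of variables for a shifted trajectory tested against a functional on an interval. -/
lemma aux_shift {E : Type*} [NormedAddCommGroup E] [NormedSpace ℝ E]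
    (g : ℝ → E) (ℓ₀ : StrongDual ℝ E) (τ T a b : ℝ) (hτ : 0 ≤ τ) :
    ∫ t in Set.Ioc a b, ℓ₀ (g (t + τ)) ∂(volume.restrict (Set.Ioc (0:ℝ) T)) =
      ∫ s in Set.Ioc (0:ℝ) (T + τ),
        (Set.indicator (Set.Ioc (a ⊔ 0 + τ) (b ⊓ T + τ)) (fun _ => ℓ₀) s) (g s) := by
  set A := a ⊔ 0 with hA
  set B := b ⊓ T with hB
  have hA0 : (0:ℝ) ≤ A := le_max_right _ _
  have hBT : B ≤ T := min_le_right _ _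
  have h2 : ∀ t : ℝ, Set.indicator (Set.Ioc A B) (fun t => ℓ₀ (g (t + τ))) t
      = Set.indicator (Set.Ioc (A + τ) (B + τ)) (fun s => ℓ₀ (g s)) (t + τ) := by
    intro t
    by_cases h : t ∈ Set.Ioc A B
    · rw [Set.indicator_of_mem h, Set.indicator_of_mem]
      simp only [Set.mem_Ioc] at h ⊢
      exact ⟨by linarith [h.1], by linarith [h.2]⟩
    · rw [Set.indicator_of_notMem h, Set.indicator_of_notMem]
      simp only [Set.mem_Ioc] at h ⊢
      intro h'
      exact h ⟨by linarith [h'.1], by linarith [h'.2]⟩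
  have hL : ∫ t in Set.Ioc a b, ℓ₀ (g (t + τ)) ∂(volume.restrict (Set.Ioc (0:ℝ) T))
      = ∫ s in Set.Ioc (A + τ) (B + τ), ℓ₀ (g s) := by
    rw [Measure.restrict_restrict measurableSet_Ioc, Set.Ioc_inter_Ioc,
      ← integral_indicator measurableSet_Ioc]
    rw [← hA, ← hB]
    simp_rw [h2]
    rw [integral_add_right_eq_self
      (fun s => Set.indicator (Set.Ioc (A + τ) (B + τ)) (fun s => ℓ₀ (g s)) s) τ]
    rw [integral_indicator measurableSet_Ioc]
  have h3 : ∀ s : ℝ, (Set.indicator (Set.Ioc (A + τ) (B + τ)) (fun _ => ℓ₀) s) (g s)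
      = Set.indicator (Set.Ioc (A + τ) (B + τ)) (fun s => ℓ₀ (g s)) s := by
    intro s
    by_cases h : s ∈ Set.Ioc (A + τ) (B + τ)
    · rw [Set.indicator_of_mem h, Set.indicator_of_mem h]
    · rw [Set.indicator_of_notMem h, Set.indicator_of_notMem h]; rfl
  have hR : ∫ s in Set.Ioc (0:ℝ) (T + τ),
      (Set.indicator (Set.Ioc (A + τ) (B + τ)) (fun _ => ℓ₀) s) (g s)
      = ∫ s in Set.Ioc (A + τ) (B + τ), ℓ₀ (g s) := by
    simp_rw [h3]
    rw [setIntegral_indicator measurableSet_Ioc, Set.Ioc_inter_Ioc,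
      sup_eq_right.mpr (by linarith : (0:ℝ) ≤ A + τ),
      inf_eq_right.mpr (by linarith : B + τ ≤ T + τ)]
  rw [hL, hR]

/-- Weak convergence passes to shifted trajectories tested on intervals. -/
lemma aux_conv {E : Type*} [NormedAddCommGroup E] [NormedSpace ℝ E]
    (p' : ℝ≥0∞) (w : ℕ → ℝ → E) (z : ℝ → E)
    (hcv : ∀ T : ℝ, 0 < T → ∀ φ : ℝ → StrongDual ℝ E,
      MemLp φ p' (volume.restrict (Set.Ioc (0 : ℝ) T)) →
      Filter.Tendsto (fun m => ∫ t in Set.Ioc (0:ℝ) T, φ t (w m t)) Filter.atTop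
        (nhds (∫ t in Set.Ioc (0:ℝ) T, φ t (z t))))
    (τ T a b : ℝ) (hτ : 0 ≤ τ) (hT : 0 < T) (ℓ₀ : StrongDual ℝ E) :
    Filter.Tendsto
      (fun m => ∫ t in Set.Ioc a b, ℓ₀ (w m (t+τ)) ∂(volume.restrict (Set.Ioc (0:ℝ) T)))
      Filter.atTop
      (nhds (∫ t in Set.Ioc a b, ℓ₀ (z (t+τ)) ∂(volume.restrict (Set.Ioc (0:ℝ) T)))) := by
  have hT' : (0:ℝ) < T + τ := by linarith
  have hfin : (volume.restrict (Set.Ioc (0:ℝ) (T+τ))) (Set.Ioc (a ⊔ 0 + τ) (b ⊓ T + τ)) ≠ ⊤ := by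
    rw [Measure.restrict_apply measurableSet_Ioc]
    exact (lt_of_le_of_lt (measure_mono Set.inter_subset_left) measure_Ioc_lt_top).ne
  have hmem : MemLp (Set.indicator (Set.Ioc (a ⊔ 0 + τ) (b ⊓ T + τ)) (fun _ => ℓ₀)) p'
      (volume.restrict (Set.Ioc (0:ℝ) (T+τ))) :=
    memLp_indicator_const p' measurableSet_Ioc ℓ₀ (Or.inr hfin)
  have h := hcv (T+τ) hT' _ hmem
  have e1 : ∀ g : ℝ → E,
      ∫ t in Set.Ioc a b, ℓ₀ (g (t+τ)) ∂(volume.restrict (Set.Ioc (0:ℝ) T))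
      = ∫ s in Set.Ioc (0:ℝ) (T+τ),
          (Set.indicator (Set.Ioc (a ⊔ 0 + τ) (b ⊓ T + τ)) (fun _ => ℓ₀) s) (g s) :=
    fun g => aux_shift g ℓ₀ τ T a b hτ
  rw [e1 z]
  simp only [e1 (w _)]
  exact h

/-- A locally (on rational intervals) vanishing integrable function vanishes a.e. -/
lemma aux_vanish {w : ℝ → ℝ} (T : ℝ) (hw : Integrable w (volume.restrict (Set.Ioc (0:ℝ) T)))
    (h : ∀ a b : ℚ, a < b → ∫ t in Set.Ioo (a:ℝ) (b:ℝ), w t ∂(volume.restrict (Set.Ioc (0:ℝ) T)) = 0) :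
    w =ᵐ[volume.restrict (Set.Ioc (0:ℝ) T)] 0 := by
  set μT := volume.restrict (Set.Ioc (0:ℝ) T) with hμT
  have hIoo : ∀ a b : ℝ, μT.restrict (Set.Ioo a b) = volume.restrict (Set.Ioo a b ∩ Set.Ioc 0 T) := by
    intro a b; rw [hμT, Measure.restrict_restrict measurableSet_Ioo]
  have htot : ∫ t, w t ∂μT = 0 := by
    obtain ⟨r, hr⟩ := exists_rat_gt T
    rcases le_or_gt T 0 with hT0 | hT0
    · have : μT = 0 := by
        rw [hμT, Measure.restrict_eq_zero]
        simp [Set.Ioc_eq_empty (by linarith : ¬ (0:ℝ) < T)]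
      simp [this]
    · have hr' : (-1 : ℚ) < r := by
        have : (0:ℝ) < r := lt_trans hT0 hr
        exact_mod_cast lt_trans (by norm_num : (-1:ℝ) < 0) this
      have h0 := h (-1) r hr'
      have hsub : Set.Ioc (0:ℝ) T ⊆ Set.Ioo ((-1:ℚ):ℝ) (r:ℝ) := by
        intro x hx
        simp only [Set.mem_Ioc] at hx
        constructor
        · push_cast; linarith [hx.1]
        · exact lt_of_le_of_lt hx.2 hr
      have : μT.restrict (Set.Ioo ((-1:ℚ):ℝ) (r:ℝ)) = μT := by
        rw [hIoo, Set.inter_eq_right.mpr hsub, hμT]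
      rw [show (∫ t in Set.Ioo ((-1:ℚ):ℝ) (r:ℝ), w t ∂μT) = ∫ t, w t ∂(μT.restrict (Set.Ioo ((-1:ℚ):ℝ) (r:ℝ))) from rfl, this] at h0
      exact h0
  have hall : ∀ ⦃s : Set ℝ⦄, MeasurableSet s → ∫ t in s, w t ∂μT = 0 :=
    MeasurableSpace.induction_on_inter (C := fun s _ => ∫ t in s, w t ∂μT = 0)
      ((BorelSpace.measurable_eq (α := ℝ)).trans Real.borel_eq_generateFrom_Ioo_rat)
      Real.isPiSystem_Ioo_rat (by simp)
      (by rintro t ht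
          simp only [Set.mem_iUnion] at ht
          obtain ⟨a, b, hab, rfl⟩ := ht
          exact h a b hab)
      (by intro t ht hC
          have hadd := integral_add_compl ht hw
          rw [hC, zero_add] at hadd
          rw [hadd, htot])
      (by intro f hdisj hmeas hC
          rw [integral_iUnion hmeas hdisj hw.integrableOn]
          simp [hC])
  refine ae_eq_zero_of_forall_setIntegral_eq_of_sigmaFinite
    (fun s hs _ => hw.integrableOn) (fun s hs _ => hall hs)

/-- Integration of a functional over a measurable set is continuous on `Lp`. -/
lemma aux_cont {E : Type*} [NormedAddCommGroup E] [NormedSpace ℝ E]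
    {α : Type*} [MeasurableSpace α] (μ : Measure α) [IsFiniteMeasure μ]
    (p : ℝ≥0∞) [Fact (1 ≤ p)]
    (ℓ₀ : StrongDual ℝ E) (hℓ : ‖ℓ₀‖ ≤ 1) {s : Set α} (hs : MeasurableSet s) :
    Continuous fun f : Lp E p μ => ∫ t in s, ℓ₀ (f t) ∂μ := by
  have hint : ∀ f : Lp E p μ, Integrable (fun t => f t) μ := fun f =>
    (Lp.memLp f).integrable Fact.out
  have hexp : 0 ≤ 1 / (1:ℝ≥0∞).toReal - 1 / p.toReal := by
    rcases eq_or_ne p ⊤ with hp | hp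
    · simp [hp]
    · have h1 : (1:ℝ) ≤ p.toReal := by
        rw [← ENNReal.toReal_one]
        exact ENNReal.toReal_mono hp Fact.out
      have : 1 / p.toReal ≤ 1 := by
        rw [div_le_one (by linarith)]; linarith
      simp only [ENNReal.toReal_one]
      linarith
  set C : ℝ := ((μ Set.univ) ^ (1 / (1:ℝ≥0∞).toReal - 1 / p.toReal)).toReal with hC
  have hCtop : (μ Set.univ) ^ (1 / (1:ℝ≥0∞).toReal - 1 / p.toReal) ≠ ⊤ :=
    ENNReal.rpow_ne_top_of_nonneg hexp (measure_ne_top μ _)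
  apply LipschitzWith.continuous (K := C.toNNReal)
  apply LipschitzWith.of_dist_le_mul
  intro f g
  have hfi := hint f
  have hgi := hint g
  have hfg : Integrable (fun t => f t - g t) μ := hfi.sub hgi
  have hℓf : Integrable (fun t => ℓ₀ (f t)) μ := ℓ₀.integrable_comp hfi
  have hℓg : Integrable (fun t => ℓ₀ (g t)) μ := ℓ₀.integrable_comp hgi
  rw [dist_eq_norm]
  have h1 : ∫ t in s, ℓ₀ (f t) ∂μ - ∫ t in s, ℓ₀ (g t) ∂μ
      = ∫ t in s, ℓ₀ (f t - g t) ∂μ := by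
    rw [← integral_sub hℓf.restrict hℓg.restrict]
    simp_rw [map_sub]
  rw [h1]
  have step1 : ‖∫ t in s, ℓ₀ (f t - g t) ∂μ‖ ≤ ∫ t in s, ‖f t - g t‖ ∂μ := by
    refine (norm_integral_le_integral_norm _).trans ?_
    refine integral_mono ((ℓ₀.integrable_comp hfg).norm.restrict)
      (hfg.norm.restrict) (fun t => ?_)
    exact (ℓ₀.le_opNorm _).trans (mul_le_of_le_one_left (norm_nonneg _) hℓ)
  have step2 : ∫ t in s, ‖f t - g t‖ ∂μ ≤ ∫ t, ‖f t - g t‖ ∂μ := by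
    apply integral_mono_measure Measure.restrict_le_self ?_ hfg.norm
    exact Eventually.of_forall fun t => norm_nonneg _
  have step3 : ∫ t, ‖f t - g t‖ ∂μ = (eLpNorm (fun t => f t - g t) 1 μ).toReal := by
    rw [integral_norm_eq_lintegral_enorm hfg.1, eLpNorm_one_eq_lintegral_enorm]
  have step4 : eLpNorm (fun t => f t - g t) 1 μ
      ≤ eLpNorm (⇑(f - g)) p μ * (μ Set.univ) ^ (1 / (1:ℝ≥0∞).toReal - 1 / p.toReal) := by
    have h4 := eLpNorm_le_eLpNorm_mul_rpow_measure_univ (μ := μ)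
      (Fact.out : (1:ℝ≥0∞) ≤ p) hfg.1
    refine le_trans h4 (le_of_eq ?_)
    congr 1
    apply eLpNorm_congr_ae
    exact (Lp.coeFn_sub f g).symm
  have step5 : (eLpNorm (fun t => f t - g t) 1 μ).toReal ≤ ‖f - g‖ * C := by
    rw [Lp.norm_def, hC, ← ENNReal.toReal_mul]
    apply ENNReal.toReal_mono
    · exact ENNReal.mul_ne_top (Lp.eLpNorm_ne_top _) hCtop
    · exact step4
  calc ‖∫ t in s, ℓ₀ (f t - g t) ∂μ‖ ≤ ∫ t, ‖f t - g t‖ ∂μ := step1.trans step2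
  _ ≤ ‖f - g‖ * C := by rw [step3]; exact step5
  _ = ↑C.toNNReal * dist f g := by
    rw [Real.coe_toNNReal C ENNReal.toReal_nonneg, dist_eq_norm, mul_comm]

/-- Generic lemma: if laws of `X m` and `Y m` agree (tested on bounded continuous functions),
`ℓ i (X m ω) → ℓ i (Xv ω)` and `ℓ i (Y m ω) → ℓ i (Yv ω)` a.s. for a countable separating
family of continuous functions `ℓ`, then the laws of `Xv` and `Yv` agree. -/
lemma aux_law {Ω : Type*} [MeasurableSpace Ω] (ℙ : Measure Ω) [IsProbabilityMeasure ℙ]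
    {L : Type*} [TopologicalSpace L] [PolishSpace L] [MeasurableSpace L] [BorelSpace L]
    {ι : Type*} [Countable ι]
    (ℓ : ι → L → ℝ) (hℓc : ∀ i, Continuous (ℓ i))
    (hinj : Function.Injective (fun (f : L) (i : ι) => ℓ i f))
    (X Y : ℕ → Ω → L) (Xv Yv : Ω → L)
    (hXm : ∀ m, AEStronglyMeasurable (X m) ℙ) (hYm : ∀ m, AEStronglyMeasurable (Y m) ℙ)
    (hXvm : AEStronglyMeasurable Xv ℙ) (hYvm : AEStronglyMeasurable Yv ℙ)
    (hstat : ∀ (Φ : BoundedContinuousFunction L ℝ) m, ∫ ω, Φ (X m ω) ∂ℙ = ∫ ω, Φ (Y m ω) ∂ℙ)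
    (hae : ∀ᵐ ω ∂ℙ, ∀ i, Filter.Tendsto (fun m => ℓ i (X m ω)) Filter.atTop (nhds (ℓ i (Xv ω))) ∧
        Filter.Tendsto (fun m => ℓ i (Y m ω)) Filter.atTop (nhds (ℓ i (Yv ω)))) :
    ℙ.map Xv = ℙ.map Yv := by
  set J : L → ι → ℝ := fun f i => ℓ i f with hJ
  have hJcont : Continuous J := continuous_pi fun i => hℓc i
  have hJemb : MeasurableEmbedding J := hJcont.measurableEmbedding hinj
  have hXva : AEMeasurable Xv ℙ := hXvm.aemeasurable
  have hYva : AEMeasurable Yv ℙ := hYvm.aemeasurable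
  have hJXv : AEMeasurable (fun ω => J (Xv ω)) ℙ := hJcont.measurable.comp_aemeasurable hXva
  have hJYv : AEMeasurable (fun ω => J (Yv ω)) ℙ := hJcont.measurable.comp_aemeasurable hYva
  -- equality of the pushforwards under J
  have hmapJ : ℙ.map (fun ω => J (Xv ω)) = ℙ.map (fun ω => J (Yv ω)) := by
    haveI := Measure.isProbabilityMeasure_map hJXv
    haveI := Measure.isProbabilityMeasure_map hJYv
    refine ext_of_generate_finite (measurableCylinders fun _ : ι => ℝ)
      generateFrom_measurableCylinders.symm isPiSystem_measurableCylinders (fun t ht => ?_)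
      (by simp)
    obtain ⟨s, S, hS, rfl⟩ := (mem_measurableCylinders t).mp ht
    have hcyl : MeasurableSet (cylinder s S) := MeasurableSet.of_mem_measurableCylinders (α := fun _ : ι => ℝ) ht
    have hRc : Continuous (fun x : ι → ℝ => s.restrict x) :=
      continuous_pi fun i => continuous_apply (i : ι)
    have hvecXa : AEMeasurable (fun ω => s.restrict (J (Xv ω))) ℙ :=
      (hRc.measurable.comp hJcont.measurable).comp_aemeasurable hXva
    have hvecYa : AEMeasurable (fun ω => s.restrict (J (Yv ω))) ℙ :=
      (hRc.measurable.comp hJcont.measurable).comp_aemeasurable hYva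
    -- equality of finite-dimensional laws
    have hfin : ℙ.map (fun ω => s.restrict (J (Xv ω))) = ℙ.map (fun ω => s.restrict (J (Yv ω))) := by
      haveI := Measure.isProbabilityMeasure_map hvecXa
      haveI := Measure.isProbabilityMeasure_map hvecYa
      apply ext_of_forall_lintegral_eq_of_IsFiniteMeasure
      intro f
      have hfm : Measurable (fun x => ((f x : ℝ≥0) : ℝ≥0∞)) :=
        (ENNReal.continuous_coe.comp f.continuous).measurable
      rw [lintegral_map' hfm.aemeasurable hvecXa, lintegral_map' hfm.aemeasurable hvecYa]
      -- build a real-valued bounded continuous test function on L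
      have hGc : Continuous (fun h : L => ((f (s.restrict (J h)) : ℝ≥0) : ℝ)) :=
        NNReal.continuous_coe.comp (f.continuous.comp (hRc.comp hJcont))
      obtain ⟨Cf, hCf⟩ := f.bounded
      have hbd : ∀ h : L, ‖((f (s.restrict (J h)) : ℝ≥0) : ℝ)‖ ≤ Cf + (f 0 : ℝ) := by
        intro h
        rw [Real.norm_of_nonneg (f (s.restrict (J h))).coe_nonneg]
        have h1 := hCf (s.restrict (J h)) 0
        rw [NNReal.dist_eq] at h1
        have h2 : ((f (s.restrict (J h)) : ℝ)) - (f 0 : ℝ) ≤ Cf := (le_abs_self _).trans h1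
        linarith
      set Ψ : BoundedContinuousFunction L ℝ :=
        BoundedContinuousFunction.ofNormedAddCommGroup _ hGc (Cf + (f 0 : ℝ)) hbd with hΨ
      have hΨval : ∀ h : L, Ψ h = ((f (s.restrict (J h)) : ℝ≥0) : ℝ) := fun h => rfl
      -- a.e. convergence of the test values
      have haeX : ∀ᵐ ω ∂ℙ, Filter.Tendsto (fun m => Ψ (X m ω)) Filter.atTop (nhds (Ψ (Xv ω))) := by
        filter_upwards [hae] with ω hω
        have hv : Filter.Tendsto (fun m => s.restrict (J (X m ω))) Filter.atTop
            (nhds (s.restrict (J (Xv ω)))) :=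
          tendsto_pi_nhds.mpr fun i => (hω (i : ι)).1
        exact ((NNReal.continuous_coe.comp f.continuous).tendsto _).comp hv
      have haeY : ∀ᵐ ω ∂ℙ, Filter.Tendsto (fun m => Ψ (Y m ω)) Filter.atTop (nhds (Ψ (Yv ω))) := by
        filter_upwards [hae] with ω hω
        have hv : Filter.Tendsto (fun m => s.restrict (J (Y m ω))) Filter.atTop
            (nhds (s.restrict (J (Yv ω)))) :=
          tendsto_pi_nhds.mpr fun i => (hω (i : ι)).2
        exact ((NNReal.continuous_coe.comp f.continuous).tendsto _).comp hv
      -- limit of integrals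
      have hXlim : Filter.Tendsto (fun m => ∫ ω, Ψ (X m ω) ∂ℙ) Filter.atTop
          (nhds (∫ ω, Ψ (Xv ω) ∂ℙ)) := by
        apply tendsto_integral_of_dominated_convergence (fun _ => ‖Ψ‖)
        · exact fun m => Ψ.continuous.comp_aestronglyMeasurable (hXm m)
        · exact integrable_const _
        · exact fun m => Eventually.of_forall fun ω => Ψ.norm_coe_le_norm _
        · exact haeX
      have hYlim : Filter.Tendsto (fun m => ∫ ω, Ψ (Y m ω) ∂ℙ) Filter.atTop
          (nhds (∫ ω, Ψ (Yv ω) ∂ℙ)) := by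
        apply tendsto_integral_of_dominated_convergence (fun _ => ‖Ψ‖)
        · exact fun m => Ψ.continuous.comp_aestronglyMeasurable (hYm m)
        · exact integrable_const _
        · exact fun m => Eventually.of_forall fun ω => Ψ.norm_coe_le_norm _
        · exact haeY
      have heq : (fun m => ∫ ω, Ψ (X m ω) ∂ℙ) = fun m => ∫ ω, Ψ (Y m ω) ∂ℙ :=
        funext fun m => hstat Ψ m
      rw [heq] at hXlim
      have hint : ∫ ω, Ψ (Xv ω) ∂ℙ = ∫ ω, Ψ (Yv ω) ∂ℙ := tendsto_nhds_unique hXlim hYlim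
      -- convert to lintegrals
      have hcoe : ∀ (Z : Ω → L), AEStronglyMeasurable Z ℙ →
          ∫⁻ ω, ((f (s.restrict (J (Z ω))) : ℝ≥0) : ℝ≥0∞) ∂ℙ
            = ENNReal.ofReal (∫ ω, Ψ (Z ω) ∂ℙ) := by
        intro Z hZ
        have hgi : Integrable (fun ω => ((f (s.restrict (J (Z ω))) : ℝ≥0) : ℝ)) ℙ := by
          refine Integrable.mono' (integrable_const (Cf + (f 0 : ℝ)))
            (hGc.comp_aestronglyMeasurable hZ) ?_
          exact Eventually.of_forall fun ω => hbd (Z ω)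
        rw [lintegral_coe_eq_integral _ hgi]
        rfl
      rw [hcoe Xv hXvm, hcoe Yv hYvm, hint]
    -- apply finite-dimensional equality to the base set
    have h1 : ∀ Z : Ω → L, (fun ω => J (Z ω)) ⁻¹' (cylinder s S)
        = (fun ω => s.restrict (J (Z ω))) ⁻¹' S := by
      intro Z; ext ω; simp [cylinder, Set.mem_preimage]
    rw [Measure.map_apply_of_aemeasurable hJXv hcyl,
      Measure.map_apply_of_aemeasurable hJYv hcyl, h1 Xv, h1 Yv,
      ← Measure.map_apply_of_aemeasurable hvecXa hS,
      ← Measure.map_apply_of_aemeasurable hvecYa hS, hfin]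
  -- transfer back through the measurable embedding
  ext A hA
  have himg : MeasurableSet (J '' A) := hJemb.measurableSet_image.mpr hA
  have e : ∀ (Z : Ω → L), AEMeasurable Z ℙ →
      ℙ.map Z A = ℙ.map (fun ω => J (Z ω)) (J '' A) := by
    intro Z hZ
    have hJZ : AEMeasurable (fun ω => J (Z ω)) ℙ := hJcont.measurable.comp_aemeasurable hZ
    rw [Measure.map_apply_of_aemeasurable hJZ himg,
      Measure.map_apply_of_aemeasurable hZ hA]
    congr 1
    rw [show (fun ω => J (Z ω)) ⁻¹' (J '' A) = Z ⁻¹' (J ⁻¹' (J '' A)) from rfl,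
      hinj.preimage_image]
  rw [e Xv hXva, e Yv hYva, hmapJ]

/-- Weak stationarity (in the sense of laws on `L^q_loc([0,∞); E)`) is preserved under
almost sure weak convergence in `L^q([0,T]; E)` for every `T > 0`.  Here `E` is a
separable reflexive Banach space (reflexivity expressed via surjectivity of the
canonical embedding into the double dual), `p` plays the role of the exponent
`q ∈ [1, ∞)` and `p'` of its conjugate exponent.  A random variable with values in
`L^q_loc([0,∞); E)` is modelled as a map `Ω → ℝ → E` whose trajectories restricted to
any `(0,T]` belong to `L^p`, such that the induced `L^p((0,T]; E)`-valued maps (of any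
time shift) are random variables; equality of the laws of the shifted and unshifted
trajectories on `L^q_loc` is expressed by testing the corresponding
`L^p((0,T]; E)`-valued random variables against all bounded continuous functions, for
every horizon `T > 0`. -/
theorem stmt0
    {Ω : Type*} [MeasurableSpace Ω] (ℙ : Measure Ω) [IsProbabilityMeasure ℙ]
    {E : Type*} [NormedAddCommGroup E] [NormedSpace ℝ E] [CompleteSpace E]
    [SecondCountableTopology E] [MeasurableSpace E] [BorelSpace E]
    (hrefl : Function.Surjective ⇑(NormedSpace.inclusionInDoubleDual ℝ E))
    (p p' : ENNReal) [Fact (1 ≤ p)] (hp : p ≠ ⊤) (hpp' : 1 / p + 1 / p' = 1)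
    (u : ℕ → Ω → ℝ → E) (v : Ω → ℝ → E)
    -- `u m` and `v` take values in `L^q_loc([0,∞); E)` :
    (humem : ∀ m ω (τ T : ℝ), 0 ≤ τ → 0 < T →
      MemLp (fun t => u m ω (t + τ)) p (volume.restrict (Set.Ioc (0 : ℝ) T)))
    (hvmem : ∀ ω (τ T : ℝ), 0 ≤ τ → 0 < T →
      MemLp (fun t => v ω (t + τ)) p (volume.restrict (Set.Ioc (0 : ℝ) T)))
    (huAE : ∀ m (τ T : ℝ) (hτ : 0 ≤ τ) (hT : 0 < T),
      AEStronglyMeasurable (fun ω => (humem m ω τ T hτ hT).toLp _) ℙ)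
    (hvAE : ∀ (τ T : ℝ) (hτ : 0 ≤ τ) (hT : 0 < T),
      AEStronglyMeasurable (fun ω => (hvmem ω τ T hτ hT).toLp _) ℙ)
    -- each `u m` is weakly stationary :
    (hustat : ∀ m (τ : ℝ) (hτ : 0 ≤ τ) (T : ℝ) (hT : 0 < T)
      (Φ : BoundedContinuousFunction (Lp E p (volume.restrict (Set.Ioc (0 : ℝ) T))) ℝ),
      ∫ ω, Φ ((humem m ω τ T hτ hT).toLp _) ∂ℙ =
        ∫ ω, Φ ((humem m ω 0 T le_rfl hT).toLp _) ∂ℙ)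
    -- a.s. weak convergence `u m ⇀ v` in `L^q([0,T]; E)` for every `T > 0` :
    (hconv : ∀ᵐ ω ∂ℙ, ∀ T : ℝ, 0 < T → ∀ φ : ℝ → StrongDual ℝ E,
      MemLp φ p' (volume.restrict (Set.Ioc (0 : ℝ) T)) →
      Tendsto (fun m => ∫ t in Set.Ioc (0 : ℝ) T, φ t (u m ω t))
        atTop (nhds (∫ t in Set.Ioc (0 : ℝ) T, φ t (v ω t)))) :
    -- conclusion: `v` is weakly stationary :
    ∀ (τ : ℝ) (hτ : 0 ≤ τ) (T : ℝ) (hT : 0 < T)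
      (Φ : BoundedContinuousFunction (Lp E p (volume.restrict (Set.Ioc (0 : ℝ) T))) ℝ),
      ∫ ω, Φ ((hvmem ω τ T hτ hT).toLp _) ∂ℙ =
        ∫ ω, Φ ((hvmem ω 0 T le_rfl hT).toLp _) ∂ℙ := by
  intro τ hτ T hT Φ
  haveI : Fact (p ≠ ⊤) := ⟨hp⟩
  obtain ⟨e, he1, hesep⟩ := aux_sep_family E
  -- the Lp space over the horizon T
  borelize (↥(Lp E p (volume.restrict (Set.Ioc (0 : ℝ) T))))
  -- the functionals
  set ℓfun : ℚ × ℚ × ℕ → Lp E p (volume.restrict (Set.Ioc (0 : ℝ) T)) → ℝ :=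
    fun i f => ∫ t in Set.Ioo ((i.1 : ℝ)) ((i.2.1 : ℝ)), e i.2.2 (f t)
                 ∂(volume.restrict (Set.Ioc (0 : ℝ) T)) with hℓdef
  have hℓc : ∀ i, Continuous (ℓfun i) := fun i =>
    aux_cont (volume.restrict (Set.Ioc (0 : ℝ) T)) p (e i.2.2) (he1 i.2.2) measurableSet_Ioo
  -- value of the functionals on toLp elements
  have hIoc : ∀ a b : ℚ, (volume.restrict (Set.Ioc (0 : ℝ) T)).restrict (Set.Ioo (a:ℝ) (b:ℝ))
      = (volume.restrict (Set.Ioc (0 : ℝ) T)).restrict (Set.Ioc (a:ℝ) (b:ℝ)) := fun a b =>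
    Measure.restrict_congr_set Ioo_ae_eq_Ioc
  have hℓval : ∀ (a b : ℚ) (n : ℕ) (θ : ℝ) (f : ℝ → E)
      (hf : MemLp (fun t => f (t + θ)) p (volume.restrict (Set.Ioc (0 : ℝ) T))),
      ℓfun (a, b, n) (hf.toLp _)
        = ∫ t in Set.Ioc (a:ℝ) (b:ℝ), e n (f (t + θ)) ∂(volume.restrict (Set.Ioc (0 : ℝ) T)) := by
    intro a b n θ f hf
    show (∫ t in Set.Ioo (a:ℝ) (b:ℝ), e n ((hf.toLp _) t) ∂(volume.restrict (Set.Ioc (0 : ℝ) T))) = _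
    rw [hIoc a b]
    apply integral_congr_ae
    filter_upwards [ae_restrict_of_ae hf.coeFn_toLp] with t ht
    rw [ht]
  -- injectivity of the family
  have hinj : Function.Injective
      (fun (f : Lp E p (volume.restrict (Set.Ioc (0 : ℝ) T))) (i : ℚ × ℚ × ℕ) => ℓfun i f) := by
    intro f g hfg
    have hfg' : ∀ i, ℓfun i f = ℓfun i g := fun i => congrFun hfg i
    have hint : ∀ h : Lp E p (volume.restrict (Set.Ioc (0 : ℝ) T)),
        Integrable (fun t => h t) (volume.restrict (Set.Ioc (0 : ℝ) T)) := fun h =>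
      (Lp.memLp h).integrable Fact.out
    have hz : ∀ n : ℕ, (fun t => e n (f t - g t)) =ᵐ[volume.restrict (Set.Ioc (0 : ℝ) T)] 0 := by
      intro n
      apply aux_vanish T ((e n).integrable_comp ((hint f).sub (hint g)))
      intro a b _
      have h1 := hfg' (a, b, n)
      have h2 : ∫ t in Set.Ioo (a:ℝ) (b:ℝ), (e n (f t) - e n (g t))
          ∂(volume.restrict (Set.Ioc (0 : ℝ) T)) = 0 := by
        rw [integral_sub (((e n).integrable_comp (hint f)).restrict)
          (((e n).integrable_comp (hint g)).restrict), sub_eq_zero]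
        exact h1
      simpa [map_sub] using h2
    have hz2 : ∀ᵐ t ∂(volume.restrict (Set.Ioc (0 : ℝ) T)), ∀ n : ℕ, e n (f t - g t) = 0 :=
      ae_all_iff.mpr fun n => by filter_upwards [hz n] with t ht; simpa using ht
    apply Lp.ext (p := p) (μ := volume.restrict (Set.Ioc (0 : ℝ) T))
    filter_upwards [hz2] with t ht
    exact sub_eq_zero.mp (hesep (f t - g t) ht)
  -- a.e. convergence of the functionals along the sequences
  have hae : ∀ᵐ ω ∂ℙ, ∀ i : ℚ × ℚ × ℕ,
      Tendsto (fun m => ℓfun i ((humem m ω τ T hτ hT).toLp _)) atTop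
        (nhds (ℓfun i ((hvmem ω τ T hτ hT).toLp _))) ∧
      Tendsto (fun m => ℓfun i ((humem m ω 0 T le_rfl hT).toLp _)) atTop
        (nhds (ℓfun i ((hvmem ω 0 T le_rfl hT).toLp _))) := by
    filter_upwards [hconv] with ω hω
    rintro ⟨a, b, n⟩
    constructor
    · have em : ∀ m, ℓfun (a, b, n) ((humem m ω τ T hτ hT).toLp _)
          = ∫ t in Set.Ioc (a:ℝ) (b:ℝ), e n (u m ω (t + τ))
              ∂(volume.restrict (Set.Ioc (0 : ℝ) T)) :=
        fun m => hℓval a b n τ (u m ω) (humem m ω τ T hτ hT)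
      have ev := hℓval a b n τ (v ω) (hvmem ω τ T hτ hT)
      simp only [em, ev]
      exact aux_conv p' (fun m => u m ω) (v ω) hω τ T a b hτ hT (e n)
    · have em : ∀ m, ℓfun (a, b, n) ((humem m ω 0 T le_rfl hT).toLp _)
          = ∫ t in Set.Ioc (a:ℝ) (b:ℝ), e n (u m ω (t + 0))
              ∂(volume.restrict (Set.Ioc (0 : ℝ) T)) :=
        fun m => hℓval a b n 0 (u m ω) (humem m ω 0 T le_rfl hT)
      have ev := hℓval a b n 0 (v ω) (hvmem ω 0 T le_rfl hT)
      simp only [em, ev]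
      exact aux_conv p' (fun m => u m ω) (v ω) hω 0 T a b le_rfl hT (e n)
  -- conclusion via the abstract law-equality lemma
  have hXva : AEMeasurable (fun ω => (hvmem ω τ T hτ hT).toLp _) ℙ :=
    (hvAE τ T hτ hT).aemeasurable
  have hYva : AEMeasurable (fun ω => (hvmem ω 0 T le_rfl hT).toLp _) ℙ :=
    (hvAE 0 T le_rfl hT).aemeasurable
  have hkey := aux_law ℙ ℓfun hℓc hinj
    (fun m ω => (humem m ω τ T hτ hT).toLp _)
    (fun m ω => (humem m ω 0 T le_rfl hT).toLp _)
    (fun ω => (hvmem ω τ T hτ hT).toLp _)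
    (fun ω => (hvmem ω 0 T le_rfl hT).toLp _)
    (fun m => huAE m τ T hτ hT) (fun m => huAE m 0 T le_rfl hT)
    (hvAE τ T hτ hT) (hvAE 0 T le_rfl hT)
    (fun Ψ m => hustat m τ hτ T hT Ψ) hae
  calc ∫ ω, Φ ((hvmem ω τ T hτ hT).toLp _) ∂ℙ
      = ∫ y, Φ y ∂(ℙ.map (fun ω => (hvmem ω τ T hτ hT).toLp _)) :=
        (integral_map hXva Φ.continuous.aestronglyMeasurable).symm
    _ = ∫ y, Φ y ∂(ℙ.map (fun ω => (hvmem ω 0 T le_rfl hT).toLp _)) := by rw [hkey]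
    _ = ∫ ω, Φ ((hvmem ω 0 T le_rfl hT).toLp _) ∂ℙ :=
        integral_map hYva Φ.continuous.aestronglyMeasurable
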